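/- (Count of vertical 6-cycles at a given level.) Let n ≥ 3 and 0 ≤ i ≤ n−3. Let K_i be the subgroup of Equiv.Perm (Fin n) generated by {s_i, s_{i+1}}. The predicate 'σ⁻¹(n−1) ∈ {i, i+1, i+2}' is invariant under right multiplication of σ by elements of K_i, hence descends to the set of left cosets σK_i. The number of left cosets of K_i in Equiv.Perm (Fin n) whose representatives σ satisfy σ⁻¹(n−1) ∈ {i, i+1, i+2} equals (n−1)!/2. (These cosets are precisely the vertical primitive 6-cycles with transpositions s_i, s_{i+1}.) -/

import Mathlib

open Equiv Equiv.Perm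

lemma swap_viaEmbedding {α β : Type*} [DecidableEq α] [DecidableEq β] (ι : α ↪ β) (x y : α) :
    (Equiv.swap x y).viaEmbedding ι = Equiv.swap (ι x) (ι y) := by
  ext z
  by_cases hz : z ∈ Set.range ι
  · obtain ⟨w, rfl⟩ := hz
    rw [Perm.viaEmbedding_apply, ι.injective.swap_apply]
  · rw [Perm.viaEmbedding_apply_of_notMem _ _ _ hz,
      Equiv.swap_apply_of_ne_of_ne (fun h => hz ⟨x, h.symm⟩) (fun h => hz ⟨y, h.symm⟩)]

-- Perm (Fin 3) generated by adjacent swaps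

lemma closure_swaps_fin3 :
    Subgroup.closure ({Equiv.swap 0 1, Equiv.swap 1 2} : Set (Equiv.Perm (Fin 3))) = ⊤ := by
  rw [eq_top_iff]
  intro σ _
  have h0 : Equiv.swap (0:Fin 3) 1 ∈ Subgroup.closure ({Equiv.swap 0 1, Equiv.swap 1 2} : Set (Equiv.Perm (Fin 3))) :=
    Subgroup.subset_closure (Set.mem_insert _ _)
  have h1 : Equiv.swap (1:Fin 3) 2 ∈ Subgroup.closure ({Equiv.swap 0 1, Equiv.swap 1 2} : Set (Equiv.Perm (Fin 3))) :=
    Subgroup.subset_closure (Set.mem_insert_of_mem _ rfl)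
  have : ∀ τ : Equiv.Perm (Fin 3), τ = 1 ∨ τ = Equiv.swap 0 1 ∨ τ = Equiv.swap 1 2 ∨
      τ = Equiv.swap 0 1 * Equiv.swap 1 2 ∨ τ = Equiv.swap 1 2 * Equiv.swap 0 1 ∨
      τ = Equiv.swap 0 1 * Equiv.swap 1 2 * Equiv.swap 0 1 := by decide
  rcases this σ with h|h|h|h|h|h <;> subst h
  · exact Subgroup.one_mem _
  · exact h0
  · exact h1
  · exact Subgroup.mul_mem _ h0 h1
  · exact Subgroup.mul_mem _ h1 h0
  · exact Subgroup.mul_mem _ (Subgroup.mul_mem _ h0 h1) h0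

-- card of perms sending a to b

lemma card_sends (n : ℕ) (hn : 1 ≤ n) (a b : Fin n) :
    Nat.card {τ : Equiv.Perm (Fin n) // τ a = b} = (n - 1).factorial := by
  obtain ⟨m, rfl⟩ : ∃ m, n = m + 1 := ⟨n - 1, by omega⟩
  have e1 : {τ : Equiv.Perm (Fin (m+1)) // τ a = b} ≃ {τ : Equiv.Perm (Fin (m+1)) // τ 0 = b} :=
    { toFun := fun τ => ⟨τ.1 * Equiv.swap 0 a, by simp [τ.2]⟩
      invFun := fun τ => ⟨τ.1 * Equiv.swap 0 a, by simp [τ.2]⟩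
      left_inv := fun τ => by ext1; simp [mul_assoc]
      right_inv := fun τ => by ext1; simp [mul_assoc] }
  have e2 : {τ : Equiv.Perm (Fin (m+1)) // τ 0 = b} ≃ Equiv.Perm (Fin m) :=
    { toFun := fun τ => (Equiv.Perm.decomposeFin τ.1).2
      invFun := fun e => ⟨Equiv.Perm.decomposeFin.symm (b, e),
        Equiv.Perm.decomposeFin_symm_apply_zero b e⟩
      left_inv := fun τ => by
        ext1
        have : (Equiv.Perm.decomposeFin τ.1).1 = b := by
          have := Equiv.Perm.decomposeFin_symm_apply_zero (Equiv.Perm.decomposeFin τ.1).1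
            (Equiv.Perm.decomposeFin τ.1).2
          rw [Prod.mk.eta, Equiv.symm_apply_apply] at this
          rw [← this]; exact τ.2
        simp only [← this, Prod.mk.eta, Equiv.symm_apply_apply]
      right_inv := fun e => by simp }
  rw [Nat.card_congr (e1.trans e2), Nat.card_eq_fintype_card, Fintype.card_perm, Fintype.card_fin]
  simp

lemma card_triple (n i : ℕ) (hn : 3 ≤ n) (hi : i + 3 ≤ n) (a : Fin n) :
    Nat.card {τ : Equiv.Perm (Fin n) // (τ a : Fin n).val ∈ ({i, i+1, i+2} : Set ℕ)} =
      3 * (n-1).factorial := by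
  classical
  set t : Finset (Fin n) := {⟨i, by omega⟩, ⟨i+1, by omega⟩, ⟨i+2, by omega⟩} with ht
  have hmemt : ∀ x : Fin n, x.val ∈ ({i,i+1,i+2} : Set ℕ) ↔ x ∈ t := by
    intro x; simp [ht, Fin.ext_iff, Set.mem_insert_iff]
  rw [Nat.card_eq_fintype_card, Fintype.card_subtype]
  have h1 : Finset.univ.filter (fun τ : Equiv.Perm (Fin n) => (τ a).val ∈ ({i,i+1,i+2}:Set ℕ))
      = Finset.univ.filter (fun τ => τ a ∈ t) := by
    apply Finset.filter_congr; intro τ _; simp only [hmemt]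
  rw [h1, Finset.card_eq_sum_card_fiberwise (f := fun τ => τ a) (t := t)
    (s := Finset.univ.filter (fun τ : Equiv.Perm (Fin n) => τ a ∈ t))
    (fun τ hτ => (Finset.mem_filter.mp hτ).2)]
  have hfib : ∀ b ∈ t, ((Finset.univ.filter (fun τ : Equiv.Perm (Fin n) => τ a ∈ t)).filter
      (fun τ => τ a = b)).card = (n-1).factorial := by
    intro b hb
    have h2 : (Finset.univ.filter (fun τ : Equiv.Perm (Fin n) => τ a ∈ t)).filter
        (fun τ => τ a = b) = Finset.univ.filter (fun τ : Equiv.Perm (Fin n) => τ a = b) := by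
      ext τ
      simp only [Finset.mem_filter, Finset.mem_univ, true_and]
      exact ⟨fun h => h.2, fun h => ⟨h ▸ hb, h⟩⟩
    rw [h2, ← Fintype.card_subtype, ← Nat.card_eq_fintype_card, card_sends n (by omega) a b]
  rw [Finset.sum_congr rfl hfib, Finset.sum_const, smul_eq_mul]
  have htcard : t.card = 3 := by
    rw [ht, Finset.card_insert_of_notMem, Finset.card_insert_of_notMem,
      Finset.card_singleton] <;> simp [Fin.ext_iff]
  rw [htcard]

/-- The adjacent transposition `s_j = (j, j+1)` in the symmetric group on `Fin n`,
indexed by `j : Fin (n-1)`. -/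
def s {n : ℕ} (j : Fin (n - 1)) : Equiv.Perm (Fin n) :=
  Equiv.swap ⟨j.val, by have := j.isLt; omega⟩ ⟨j.val + 1, by have := j.isLt; omega⟩

/-- count of vertical 6-cycles at a given level: let `K_i = ⟨s_i, s_{i+1}⟩`.
The verticality predicate `σ⁻¹(n-1) ∈ {i, i+1, i+2}` is invariant under right
multiplication by elements of `K_i`, and the number of left cosets of `K_i` whose
representatives satisfy it equals `(n-1)!/2`. -/
theorem card_vertical_six_cycles (n : ℕ) (hn : 3 ≤ n) (i : ℕ) (hi : i + 3 ≤ n) :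
    let K : Subgroup (Equiv.Perm (Fin n)) :=
      Subgroup.closure {s ⟨i, by omega⟩, s ⟨i + 1, by omega⟩}
    let P : Equiv.Perm (Fin n) → Prop := fun σ =>
      (σ⁻¹ ⟨n - 1, by omega⟩ : Fin n).val ∈ ({i, i + 1, i + 2} : Set ℕ)
    (∀ σ τ : Equiv.Perm (Fin n), τ ∈ K → (P (σ * τ) ↔ P σ)) ∧
    Nat.card {x : Equiv.Perm (Fin n) ⧸ K // ∃ σ, QuotientGroup.mk σ = x ∧ P σ} =
      (n - 1).factorial / 2 := by
  intro K P
  set a : Fin n := ⟨n - 1, by omega⟩ with ha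
  -- the embedding of Fin 3 onto positions {i, i+1, i+2}
  set ι : Fin 3 ↪ Fin n := ⟨fun j => ⟨i + j.val, by have := j.isLt; omega⟩,
    fun x y h => by simpa [Fin.ext_iff] using h⟩ with hι
  set f : Equiv.Perm (Fin 3) →* Equiv.Perm (Fin n) := Equiv.Perm.viaEmbeddingHom ι with hf
  have hfinj : Function.Injective f := Equiv.Perm.viaEmbeddingHom_injective ι
  have h0 : f (Equiv.swap 0 1) = s ⟨i, by omega⟩ := by
    rw [hf, Equiv.Perm.viaEmbeddingHom_apply, swap_viaEmbedding]
    show Equiv.swap (ι 0) (ι 1) = _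
    unfold s
    congr 1 <;> simp [hι, Fin.ext_iff]
  have h1 : f (Equiv.swap 1 2) = s ⟨i + 1, by omega⟩ := by
    rw [hf, Equiv.Perm.viaEmbeddingHom_apply, swap_viaEmbedding]
    show Equiv.swap (ι 1) (ι 2) = _
    unfold s
    congr 1 <;> simp [hι, Fin.ext_iff]
  have hK : K = f.range := by
    show Subgroup.closure _ = _
    rw [← h0, ← h1, ← Set.image_pair, ← MonoidHom.map_closure, closure_swaps_fin3,
      ← MonoidHom.range_eq_map]
  -- membership of triple ↔ being in range of ι
  have hmem : ∀ x : Fin n, x.val ∈ ({i, i+1, i+2} : Set ℕ) ↔ x ∈ Set.range ι := by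
    intro x
    constructor
    · intro hx
      simp only [Set.mem_insert_iff, Set.mem_singleton_iff] at hx
      exact ⟨⟨x.val - i, by omega⟩, by rw [Fin.ext_iff]; change i + (x.val - i) = x.val; omega⟩
    · rintro ⟨j, rfl⟩
      have := j.isLt
      simp only [hι, Function.Embedding.coeFn_mk, Set.mem_insert_iff, Set.mem_singleton_iff]
      change i + j.val = i ∨ i + j.val = i + 1 ∨ i + j.val = i + 2
      omega
  -- elements of K preserve the triple
  have hinv : ∀ τ : Equiv.Perm (Fin n), τ ∈ K → ∀ x : Fin n,
      ((τ x : Fin n).val ∈ ({i, i+1, i+2} : Set ℕ) ↔ x.val ∈ ({i, i+1, i+2} : Set ℕ)) := by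
    intro τ hτ x
    rw [hK] at hτ
    obtain ⟨π, rfl⟩ := hτ
    rw [hmem, hmem]
    constructor
    · intro h
      by_contra hx
      rw [hf, Equiv.Perm.viaEmbeddingHom_apply,
        Equiv.Perm.viaEmbedding_apply_of_notMem _ _ _ hx] at h
      exact hx h
    · rintro ⟨y, rfl⟩
      rw [hf, Equiv.Perm.viaEmbeddingHom_apply, Equiv.Perm.viaEmbedding_apply]
      exact ⟨π y, rfl⟩
  have hP1 : ∀ σ τ : Equiv.Perm (Fin n), τ ∈ K → (P (σ * τ) ↔ P σ) := by
    intro σ τ hτ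
    show ((σ * τ)⁻¹ a).val ∈ _ ↔ (σ⁻¹ a).val ∈ _
    rw [mul_inv_rev, Equiv.Perm.mul_apply]
    exact hinv τ⁻¹ (K.inv_mem hτ) (σ⁻¹ a)
  refine ⟨hP1, ?_⟩
  set T : Set (Equiv.Perm (Fin n) ⧸ K) := QuotientGroup.mk '' {σ | P σ} with hT
  have e1 : {x : Equiv.Perm (Fin n) ⧸ K // ∃ σ, QuotientGroup.mk σ = x ∧ P σ} ≃ T :=
    Equiv.subtypeEquivRight (fun x => by
      rw [hT, Set.mem_image]
      exact ⟨fun ⟨σ, h1, h2⟩ => ⟨σ, h2, h1⟩, fun ⟨σ, h1, h2⟩ => ⟨σ, h2, h1⟩⟩)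
  have hpre : QuotientGroup.mk ⁻¹' T = {σ | P σ} := by
    ext σ
    simp only [Set.mem_preimage, hT, Set.mem_image, Set.mem_setOf_eq]
    constructor
    · rintro ⟨σ', hσ', heq⟩
      have hmemK : σ'⁻¹ * σ ∈ K := (QuotientGroup.eq ).mp heq
      have := hP1 σ' (σ'⁻¹ * σ) hmemK
      rw [mul_inv_cancel_left] at this
      exact this.mpr hσ'
    · intro h; exact ⟨σ, h, rfl⟩
  have cardK : Nat.card K = 6 := by
    rw [hK]
    have : (f.range : Type _) ≃ Equiv.Perm (Fin 3) :=
      (Equiv.subtypeEquivRight (fun x => by simp [MonoidHom.mem_range, Set.mem_range])).trans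
        (Equiv.ofInjective f hfinj).symm
    rw [Nat.card_congr this, Nat.card_eq_fintype_card, Fintype.card_perm, Fintype.card_fin]
    rfl
  have einv : {σ : Equiv.Perm (Fin n) // P σ} ≃
      {τ : Equiv.Perm (Fin n) // (τ a : Fin n).val ∈ ({i, i+1, i+2} : Set ℕ)} :=
    { toFun := fun σ => ⟨σ.1⁻¹, σ.2⟩
      invFun := fun τ => ⟨τ.1⁻¹, by show ((τ.1⁻¹)⁻¹ a).val ∈ _; rw [inv_inv]; exact τ.2⟩
      left_inv := fun σ => by ext1; simp
      right_inv := fun τ => by ext1; simp }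
  have cardV : Nat.card {σ : Equiv.Perm (Fin n) // P σ} = 3 * (n - 1).factorial := by
    rw [Nat.card_congr einv, card_triple n i hn hi a]
  have key : Nat.card K * Nat.card T = 3 * (n - 1).factorial := by
    rw [← Nat.card_prod, ← Nat.card_congr (QuotientGroup.preimageMkEquivSubgroupProdSet K T)]
    rw [← cardV]
    apply Nat.card_congr
    exact Equiv.setCongr hpre
  rw [Nat.card_congr e1]
  rw [cardK] at key
  have h2 : 2 ∣ (n - 1).factorial := Nat.dvd_factorial (by norm_num) (by omega)
  omega
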